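/- For all integers s, r, q with 1 ≤ s ≤ r and q ≥ 0, the following Hankel determinant with Hahn-weight entries evaluates in closed product form: det_{1≤j,k≤s}[ Σ_{m=0}^{r-1} m^{j+k-2} · C(m+q, m) ] = ∏_{j=0}^{s-1} (j! · (j+q)!)² · (j+q+r)! / ( q! · (r−j−1)! · (2j+q)! · (2j+q+1)! ). (Here C(·,·) denotes the binomial coefficient and the convention m^0 = 1 is used, including for m = 0; the identity is an equality of rational numbers.) -/

import Mathlib

open Finset

namespace HahnGram

open Polynomial

/-- backward-difference expansion of order `n+1` in terms of order `n`. -/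
lemma delta_succ (n : ℕ) (f : ℕ → ℚ) :
    ∑ i ∈ range (n+2), (-1:ℚ)^i * ((n+1).choose i) * f i
      = ∑ i ∈ range (n+1), (-1:ℚ)^i * (n.choose i) * (f i - f (i+1)) := by
  have key : ∀ i, (-1:ℚ)^(i+1) * ((n+1).choose (i+1)) * f (i+1)
      = -((-1)^i * (n.choose i) * f (i+1)) - (-1)^i * (n.choose (i+1)) * f (i+1) := by
    intro i
    rw [Nat.choose_succ_succ]
    push_cast
    ring
  rw [Finset.sum_range_succ' _ (n+1)]
  simp only [key]
  have h2 : ∑ i ∈ range (n+1), (-1:ℚ)^i * (n.choose (i+1)) * f (i+1)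
      = ∑ i ∈ range n, (-1:ℚ)^i * (n.choose (i+1)) * f (i+1) := by
    rw [Finset.sum_range_succ, Nat.choose_succ_self]
    simp
  have h3 : ∑ i ∈ range (n+1), (-1:ℚ)^i * (n.choose i) * f i
      = ∑ i ∈ range n, (-1:ℚ)^(i+1) * (n.choose (i+1)) * f (i+1)
          + (-1:ℚ)^0 * (n.choose 0) * f 0 := by
    rw [← Finset.sum_range_succ' (fun i => (-1:ℚ)^i * (n.choose i) * f i) n]
  have hB : ∑ i ∈ range n, (-1:ℚ)^(i+1) * (n.choose (i+1)) * f (i+1)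
      = -(∑ i ∈ range n, (-1:ℚ)^i * (n.choose (i+1)) * f (i+1)) := by
    rw [← Finset.sum_neg_distrib]
    exact Finset.sum_congr rfl fun i _ => by ring
  simp only [mul_sub]
  rw [Finset.sum_sub_distrib, h2, Finset.sum_sub_distrib, h3, hB]
  simp
  abel


/-- alternating binomial sums kill low-degree powers -/
lemma alt_pow : ∀ n, ∀ j < n, ∑ i ∈ range (n+1), (-1:ℚ)^i * (n.choose i) * (i:ℚ)^j = 0 := by
  intro n
  induction n with
  | zero => omega
  | succ n ih =>
    intro j hj
    rw [delta_succ n (fun i => (i:ℚ)^j)]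
    have key : ∀ i : ℕ, ((i:ℚ))^j - ((i+1:ℕ):ℚ)^j
        = -∑ l ∈ range j, (j.choose l : ℚ) * (i:ℚ)^l := by
      intro i
      have hbin : ((i:ℚ)+1)^j = ∑ l ∈ range (j+1), (i:ℚ)^l * (j.choose l : ℚ) := by
        have := add_pow (i:ℚ) 1 j
        simpa [one_pow] using this
      push_cast
      rw [hbin, Finset.sum_range_succ]
      simp only [Nat.choose_self, Nat.cast_one, mul_one]
      have hs : ∑ l ∈ range j, (i:ℚ)^l * (j.choose l : ℚ)
          = ∑ l ∈ range j, (j.choose l : ℚ) * (i:ℚ)^l :=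
        Finset.sum_congr rfl fun l _ => by ring
      rw [hs]; ring
    calc ∑ i ∈ range (n+1), (-1:ℚ)^i * (n.choose i) * (((i:ℕ):ℚ)^j - ((i+1:ℕ):ℚ)^j)
        = ∑ i ∈ range (n+1), (-1:ℚ)^i * (n.choose i) * (-∑ l ∈ range j, (j.choose l : ℚ) * (i:ℚ)^l) := by
          exact Finset.sum_congr rfl fun i _ => by rw [key i]
      _ = -∑ l ∈ range j, (j.choose l : ℚ) * ∑ i ∈ range (n+1), (-1:ℚ)^i * (n.choose i) * (i:ℚ)^l := by
          rw [← Finset.sum_neg_distrib]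
          simp only [Finset.mul_sum, ← Finset.sum_neg_distrib]
          rw [Finset.sum_comm]
          exact Finset.sum_congr rfl fun i _ => Finset.sum_congr rfl fun l _ => by ring
      _ = 0 := by
          have hz : ∀ l ∈ range j, (j.choose l : ℚ) *
              (∑ i ∈ range (n+1), (-1:ℚ)^i * (n.choose i) * (i:ℚ)^l) = 0 := by
            intro l hl
            simp only [mem_range] at hl
            rw [ih l (by omega), mul_zero]
          rw [Finset.sum_congr rfl hz]
          simp

/-- `∇ⁿ` of the binomial `C(·,n)` is constant `1`. -/
lemma alt_choose : ∀ n, ∀ t, n ≤ t →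
    ∑ i ∈ range (n+1), (-1:ℚ)^i * (n.choose i) * (((t-i).choose n : ℕ):ℚ) = 1 := by
  intro n
  induction n with
  | zero => intro t _; simp
  | succ n ih =>
    intro t ht
    rw [delta_succ n (fun i => (((t-i).choose (n+1) : ℕ):ℚ))]
    have key : ∀ i ∈ range (n+1), (-1:ℚ)^i * (n.choose i) *
          ((((t-i).choose (n+1) : ℕ):ℚ) - (((t-(i+1)).choose (n+1) : ℕ):ℚ))
        = (-1:ℚ)^i * (n.choose i) * ((((t-1-i).choose n : ℕ):ℚ)) := by
      intro i hi
      simp only [mem_range] at hi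
      have h1 : t - i = (t - (i+1)) + 1 := by omega
      have h2 : (t - i).choose (n+1) = (t - (i+1)).choose n + (t-(i+1)).choose (n+1) := by
        rw [h1, Nat.choose_succ_succ]
      have h3 : t - (i+1) = t - 1 - i := by omega
      rw [h2, h3]
      push_cast
      ring
    rw [Finset.sum_congr rfl key]
    exact ih (t-1) (by omega)

/-- triangle swap -/
lemma tsw {β : Type*} [AddCommMonoid β] (N : ℕ) (f : ℕ → ℕ → β) :
    ∑ t ∈ range (N+1), ∑ j ∈ range (N-t+1), f t j
      = ∑ M ∈ range (N+1), ∑ t ∈ range (M+1), f t (M-t) := by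
  rw [Finset.sum_sigma', Finset.sum_sigma']
  apply Finset.sum_nbij' (i := fun p => (⟨p.1 + p.2, p.1⟩ : Σ _ : ℕ, ℕ))
    (j := fun p => (⟨p.2, p.1 - p.2⟩ : Σ _ : ℕ, ℕ))
  · intro p hp
    simp only [mem_sigma, mem_range] at hp ⊢
    omega
  · intro p hp
    simp only [mem_sigma, mem_range] at hp ⊢
    omega
  · intro p hp
    simp only [mem_sigma, mem_range] at hp
    have : p.1 + p.2 - p.1 = p.2 := by omega
    simp [this]
  · intro p hp
    simp only [mem_sigma, mem_range] at hp
    have : p.2 + (p.1 - p.2) = p.1 := by omega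
    simp [this]
  · intro p hp
    simp only [mem_sigma, mem_range] at hp
    dsimp only
    congr 1
    omega

/-- Vandermonde convolution with both upper indices varying. -/
lemma vc : ∀ b a N : ℕ, ∑ t ∈ range (N+1), (t+a).choose a * (N-t+b).choose b
    = (N+a+b+1).choose (a+b+1) := by
  intro b
  induction b with
  | zero =>
    intro a N
    simp only [Nat.choose_zero_right, mul_one, Nat.add_zero]
    exact Nat.sum_range_add_choose N a
  | succ b ih =>
    intro a N
    have expand : ∀ t ∈ range (N+1), (t+a).choose a * (N-t+(b+1)).choose (b+1)
        = ∑ j ∈ range (N-t+1), (t+a).choose a * (j+b).choose b := by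
      intro t _
      have h : N - t + (b+1) = N - t + b + 1 := by omega
      rw [h, ← Nat.sum_range_add_choose (N-t) b, Finset.mul_sum]
    rw [Finset.sum_congr rfl expand, tsw N (fun t j => (t+a).choose a * (j+b).choose b)]
    have inner : ∀ M ∈ range (N+1), ∑ t ∈ range (M+1), (t+a).choose a * (M-t+b).choose b
        = (M + (a+b+1)).choose (a+b+1) := by
      intro M _
      rw [ih a M]; congr 1; omega
    rw [Finset.sum_congr rfl inner, Nat.sum_range_add_choose N (a+b+1)]
    congr 1 <;> omega


/-- the two-binomial product family -/
def G (q a b c x : ℕ) : ℕ := (x+q).choose (q+a) * (c-x).choose b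

/-- Rodrigues weight function for the Hahn case -/
def F (q r n t : ℕ) : ℕ := G q n n (n+r-1) t

lemma Gstep (q a b c x : ℕ) (ha : 1 ≤ a) (hb : 1 ≤ b) (hx : x + 1 ≤ c) :
    (G q a b c x : ℚ) - G q a b c (x+1)
      = (G q a (b-1) (c-1) x : ℚ) - G q (a-1) b (c-1) x := by
  unfold G
  have P1 : (x+1+q).choose (q+a) = (x+q).choose (q+a-1) + (x+q).choose (q+a) := by
    have h := Nat.choose_succ_succ (x+q) (q+a-1)
    simp only [Nat.succ_eq_add_one] at h
    rw [show q+a-1+1 = q+a by omega] at h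
    rw [show x+1+q = x+q+1 by omega]
    exact h
  have P2 : (c-x).choose b = (c-1-x).choose (b-1) + (c-1-x).choose b := by
    have h := Nat.choose_succ_succ (c-1-x) (b-1)
    simp only [Nat.succ_eq_add_one] at h
    rw [show b-1+1 = b by omega] at h
    rw [show c-x = c-1-x+1 by omega]
    exact h
  have h3 : c - (x+1) = c-1-x := by omega
  have h4 : q + (a-1) = q + a - 1 := by omega
  rw [P1, h3, h4]
  nth_rewrite 1 [P2]
  push_cast
  ring

lemma deltaN (q : ℕ) : ∀ n a b c x : ℕ, n ≤ a → n ≤ b → x + n ≤ c →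
    ∑ i ∈ range (n+1), (-1:ℚ)^i * (n.choose i) * (G q a b c (x+i) : ℚ)
      = ∑ j ∈ range (n+1), (-1:ℚ)^j * (n.choose j) * (G q (a-j) (b-(n-j)) (c-n) x : ℚ) := by
  intro n
  induction n with
  | zero => intro a b c x _ _ _; simp
  | succ n ih =>
    intro a b c x ha hb hx
    rw [delta_succ n (fun i => (G q a b c (x+i) : ℚ))]
    have step : ∀ i ∈ range (n+1),
        (-1:ℚ)^i * (n.choose i) * ((G q a b c (x+i) : ℚ) - (G q a b c (x+(i+1)) : ℚ))
          = (-1:ℚ)^i * (n.choose i) *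
              ((G q a (b-1) (c-1) (x+i) : ℚ) - (G q (a-1) b (c-1) (x+i) : ℚ)) := by
      intro i hi
      simp only [mem_range] at hi
      rw [show x+(i+1) = x+i+1 by omega, Gstep q a b c (x+i) (by omega) (by omega) (by omega)]
    rw [Finset.sum_congr rfl step]
    simp only [mul_sub, Finset.sum_sub_distrib]
    rw [ih a (b-1) (c-1) x (by omega) (by omega) (by omega),
        ih (a-1) b (c-1) x (by omega) (by omega) (by omega)]
    rw [delta_succ n (fun j => (G q (a-j) (b-(n+1-j)) (c-(n+1)) x : ℚ))]
    simp only [mul_sub, Finset.sum_sub_distrib]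
    congr 1
    · apply Finset.sum_congr rfl
      intro j hj
      simp only [mem_range] at hj
      rw [show b-1-(n-j) = b-(n+1-j) by omega, show c-1-n = c-(n+1) by omega]
    · apply Finset.sum_congr rfl
      intro j hj
      simp only [mem_range] at hj
      rw [show a-1-j = a-(j+1) by omega, show b-(n-j) = b-(n+1-(j+1)) by omega,
          show c-1-n = c-(n+1) by omega]


noncomputable def R (q r n m : ℕ) : ℚ :=
  ∑ i ∈ range (n+1), (-1:ℚ)^i * (n.choose i) * (F q r n (m+i) : ℚ)


lemma Fzero_lt {q r n t : ℕ} (h : t < n) : F q r n t = 0 := by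
  unfold F G
  rw [Nat.choose_eq_zero_of_lt (by omega)]
  simp

lemma Fzero_ge {q r n t : ℕ} (h : r ≤ t) (hn : 1 ≤ n) : F q r n t = 0 := by
  unfold F G
  rw [Nat.choose_eq_zero_of_lt (show n+r-1-t < n by omega)]
  simp

/-- summation by parts (shift of summation) -/
lemma master (q r n : ℕ) (g : ℕ → ℚ) :
    ∑ m ∈ range r, R q r n m * g m
      = ∑ t ∈ range (n+r), (F q r n t : ℚ)
          * ∑ i ∈ range (n+1), (-1:ℚ)^i * (n.choose i) * g (t-i) := by
  unfold R
  simp only [Finset.sum_mul, Finset.mul_sum]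
  rw [Finset.sum_comm]
  conv_rhs => rw [Finset.sum_comm]
  apply Finset.sum_congr rfl
  intro i hi
  simp only [mem_range] at hi
  have shift : ∀ t ∈ range (n+r), t ∉ Ico i (r+i) → (F q r n t : ℚ) * ((-1:ℚ)^i * (n.choose i) * g (t-i)) = 0 := by
    intro t ht hnot
    simp only [mem_range] at ht
    simp only [mem_Ico, not_and_or, not_le] at hnot
    rcases hnot with h | h
    · rw [Fzero_lt (show t < n by omega)]; simp
    · rw [Fzero_ge (show r ≤ t by omega) (show 1 ≤ n by omega)]; simp
  have hsub : Ico i (r+i) ⊆ range (n+r) := by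
    intro t ht
    simp only [mem_Ico] at ht
    simp only [mem_range]
    omega
  rw [show (∑ t ∈ range (n+r), (F q r n t : ℚ) * ((-1:ℚ)^i * (n.choose i) * g (t-i)))
      = ∑ t ∈ Ico i (r+i), (F q r n t : ℚ) * ((-1:ℚ)^i * (n.choose i) * g (t-i)) from
    (Finset.sum_subset hsub (fun t ht hnot => shift t ht hnot)).symm]
  rw [Finset.sum_Ico_eq_sum_range]
  rw [show r + i - i = r by omega]
  apply Finset.sum_congr rfl
  intro m hm
  rw [show i + m - i = m by omega, show i + m = m + i by omega]
  ring

/-- total mass of `F`: a Vandermonde convolution -/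
lemma sumF (q r n : ℕ) (hn : n < r) :
    ∑ t ∈ range (n+r), F q r n t = (q+n+r).choose (q+2*n+1) := by
  rw [Finset.range_eq_Ico, ← Finset.sum_Ico_consecutive _ (Nat.zero_le n) (show n ≤ n+r by omega)]
  rw [show (∑ t ∈ Ico 0 n, F q r n t) = 0 from Finset.sum_eq_zero fun t ht => by
    simp only [mem_Ico] at ht; exact Fzero_lt ht.2]
  rw [zero_add, Finset.sum_Ico_eq_sum_range, show n + r - n = r by omega]
  have hterm : ∀ k ∈ range r, F q r n (n+k) = (k+(q+n)).choose (q+n) * (r-1-k).choose n := by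
    intro k hk
    unfold F G
    rw [show n+k+q = k+(q+n) by omega, show n+r-1-(n+k) = r-1-k by omega]
  rw [Finset.sum_congr rfl hterm]
  have hsub : range (r-1-n+1) ⊆ range r := by
    intro k hk; simp only [mem_range] at *; omega
  rw [show (∑ k ∈ range r, (k+(q+n)).choose (q+n) * (r-1-k).choose n)
      = ∑ k ∈ range (r-1-n+1), (k+(q+n)).choose (q+n) * (r-1-k).choose n from
    (Finset.sum_subset hsub (fun k hk hnot => by
      simp only [mem_range] at hk hnot
      rw [Nat.choose_eq_zero_of_lt (show r-1-k < n by omega)]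
      simp)).symm]
  have hmatch : ∀ k ∈ range (r-1-n+1), (k+(q+n)).choose (q+n) * (r-1-k).choose n
      = (k+(q+n)).choose (q+n) * ((r-1-n)-k+n).choose n := by
    intro k hk
    simp only [mem_range] at hk
    congr 2
    omega
  rw [Finset.sum_congr rfl hmatch, vc n (q+n) (r-1-n)]
  congr 1 <;> omega

/-- orthogonality to lower-degree monomials -/
lemma orth_pow (q r n k : ℕ) (hk : k < n) :
    ∑ m ∈ range r, R q r n m * (m:ℚ)^k = 0 := by
  rw [master q r n (fun m => (m:ℚ)^k)]
  apply Finset.sum_eq_zero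
  intro t ht
  simp only [mem_range] at ht
  by_cases h : t < n
  · rw [show (F q r n t : ℚ) = 0 by exact_mod_cast Fzero_lt h]
    simp
  · push_neg at h
    have inner : ∑ i ∈ range (n+1), (-1:ℚ)^i * (n.choose i) * ((t-i : ℕ):ℚ)^k = 0 := by
      have cast1 : ∀ i ∈ range (n+1), (-1:ℚ)^i * (n.choose i) * ((t-i : ℕ):ℚ)^k
          = (-1:ℚ)^i * (n.choose i) * ((t:ℚ) - (i:ℚ))^k := by
        intro i hi
        simp only [mem_range] at hi
        rw [Nat.cast_sub (by omega)]
      rw [Finset.sum_congr rfl cast1]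
      have expand : ∀ i ∈ range (n+1), (-1:ℚ)^i * (n.choose i) * ((t:ℚ) - (i:ℚ))^k
          = ∑ l ∈ range (k+1), (k.choose l : ℚ) * (t:ℚ)^(k-l) * (-1:ℚ)^l *
              ((-1:ℚ)^i * (n.choose i) * (i:ℚ)^l) := by
        intro i _
        have hb : ((t:ℚ) - (i:ℚ))^k = ∑ l ∈ range (k+1), (i:ℚ)^l * (-1:ℚ)^l * (t:ℚ)^(k-l) * (k.choose l : ℚ) := by
          have h0 : (t:ℚ) - i = (-i) + t := by ring
          rw [h0, add_pow]
          apply Finset.sum_congr rfl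
          intro l _
          rw [neg_pow]
          ring
        rw [hb, Finset.mul_sum]
        apply Finset.sum_congr rfl
        intro l _
        ring
      rw [Finset.sum_congr rfl expand, Finset.sum_comm]
      apply Finset.sum_eq_zero
      intro l hl
      simp only [mem_range] at hl
      have hz := alt_pow n l (by omega)
      calc ∑ i ∈ range (n+1), (k.choose l : ℚ) * (t:ℚ)^(k-l) * (-1:ℚ)^l *
              ((-1:ℚ)^i * (n.choose i) * (i:ℚ)^l)
          = (k.choose l : ℚ) * (t:ℚ)^(k-l) * (-1:ℚ)^l *
              ∑ i ∈ range (n+1), (-1:ℚ)^i * (n.choose i) * (i:ℚ)^l := by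
            rw [Finset.mul_sum]
        _ = 0 := by rw [hz, mul_zero]
    rw [inner, mul_zero]

/-- diagonal sum against `C(m,n)` -/
lemma orth_diag (q r n : ℕ) (hn : n < r) :
    ∑ m ∈ range r, R q r n m * ((m.choose n : ℕ):ℚ) = ((q+n+r).choose (q+2*n+1) : ℚ) := by
  rw [master q r n (fun m => ((m.choose n : ℕ):ℚ))]
  have hterm : ∀ t ∈ range (n+r), (F q r n t : ℚ)
      * (∑ i ∈ range (n+1), (-1:ℚ)^i * (n.choose i) * (((t-i).choose n : ℕ):ℚ))
      = (F q r n t : ℚ) := by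
    intro t ht
    by_cases h : t < n
    · rw [show (F q r n t : ℚ) = 0 by exact_mod_cast Fzero_lt h]
      simp
    · push_neg at h
      rw [alt_choose n t h, mul_one]
  rw [Finset.sum_congr rfl hterm, ← Nat.cast_sum, sumF q r n hn]


/-- subset-of-subset binomial identity, cast friendly form -/
lemma ext_nat (q k m : ℕ) :
    (m+q).choose (q+k) * (q+k).choose k = (m+q).choose q * m.choose k := by
  rcases le_or_gt k m with h | h
  · have h1 := Nat.choose_mul (n := m+q) (show q ≤ q+k by omega)
    -- (m+q).choose (q+k) * (q+k).choose q = (m+q).choose q * (m+q-q).choose (q+k-q)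
    rw [show m+q-q = m by omega, show q+k-q = k by omega] at h1
    rw [← Nat.choose_symm_add] at h1
    -- (q+k).choose q vs (k+q).choose k ... fix
    rw [show q+k = k+q by omega] at *
    rw [Nat.choose_symm_add] at h1 ⊢
    exact h1
  · rw [Nat.choose_eq_zero_of_lt h, Nat.choose_eq_zero_of_lt (show m+q < q+k by omega)]
    simp

lemma ext_q (q k m : ℕ) :
    ((m+q).choose (q+k) : ℚ) = ((m+q).choose q : ℚ) * (m.choose k : ℚ) / ((q+k).choose k : ℚ) := by
  have hnz : (((q+k).choose k : ℕ) : ℚ) ≠ 0 := by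
    exact_mod_cast Nat.choose_pos (show k ≤ q+k by omega) |>.ne'
  field_simp
  exact_mod_cast ext_nat q k m

/-- normalized binomial polynomial `X choose k` -/
noncomputable def Bp (k : ℕ) : ℚ[X] := Polynomial.C ((k.factorial : ℚ)⁻¹) * descPochhammer ℚ k
/-- normalized reflected binomial polynomial `(r-1-X) choose j` -/
noncomputable def Dp (r j : ℕ) : ℚ[X] :=
  Polynomial.C ((j.factorial : ℚ)⁻¹) * (descPochhammer ℚ j).comp (Polynomial.C (((r-1 : ℕ)) : ℚ) - X)

lemma Bp_eval (k m : ℕ) : (Bp k).eval (m:ℚ) = (m.choose k : ℚ) := by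
  unfold Bp
  rw [eval_mul, eval_C, descPochhammer_eval_eq_descFactorial ℚ m k,
      Nat.descFactorial_eq_factorial_mul_choose]
  push_cast
  rw [inv_mul_eq_div, mul_comm]
  rw [mul_div_assoc]
  rw [div_self (by exact_mod_cast k.factorial_ne_zero), mul_one]

lemma Dp_eval (r j m : ℕ) (hm : m ≤ r-1) : (Dp r j).eval (m:ℚ) = ((r-1-m).choose j : ℚ) := by
  unfold Dp
  rw [eval_mul, eval_C, eval_comp, eval_sub, eval_C, eval_X, ← Nat.cast_sub hm,
      descPochhammer_eval_eq_descFactorial ℚ (r-1-m) j,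
      Nat.descFactorial_eq_factorial_mul_choose]
  push_cast
  rw [inv_mul_eq_div, mul_comm, mul_div_assoc, div_self (by exact_mod_cast j.factorial_ne_zero), mul_one]

lemma Bp_natDegree (k : ℕ) : (Bp k).natDegree = k := by
  unfold Bp
  rw [natDegree_C_mul (by exact_mod_cast inv_ne_zero (show (k.factorial:ℚ) ≠ 0 by exact_mod_cast k.factorial_ne_zero)),
      descPochhammer_natDegree]

lemma lin_natDegree (r : ℕ) : (Polynomial.C (((r-1:ℕ)):ℚ) - X).natDegree = 1 := by
  rw [show Polynomial.C (((r-1:ℕ)):ℚ) - X = -(X - Polynomial.C (((r-1:ℕ)):ℚ)) by ring,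
      natDegree_neg, natDegree_X_sub_C]

lemma Dp_natDegree (r j : ℕ) : (Dp r j).natDegree = j := by
  unfold Dp
  rw [natDegree_C_mul (by exact_mod_cast inv_ne_zero (show (j.factorial:ℚ) ≠ 0 by exact_mod_cast j.factorial_ne_zero)),
      natDegree_comp, lin_natDegree, descPochhammer_natDegree, mul_one]

lemma Bp_coeff_top (k : ℕ) : (Bp k).coeff k = (k.factorial : ℚ)⁻¹ := by
  unfold Bp
  rw [coeff_C_mul]
  have : (descPochhammer ℚ k).coeff k = 1 := by
    have hm := monic_descPochhammer ℚ k
    have := hm.leadingCoeff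
    rwa [leadingCoeff, descPochhammer_natDegree] at this
  rw [this, mul_one]

lemma Dp_coeff_top (r j : ℕ) : (Dp r j).coeff j = (-1:ℚ)^j * (j.factorial : ℚ)⁻¹ := by
  unfold Dp
  rw [coeff_C_mul]
  have hdeg : ((descPochhammer ℚ j).comp (Polynomial.C (((r-1:ℕ)):ℚ) - X)).natDegree = j := by
    rw [natDegree_comp, lin_natDegree, descPochhammer_natDegree, mul_one]
  have hlc : ((descPochhammer ℚ j).comp (Polynomial.C (((r-1:ℕ)):ℚ) - X)).leadingCoeff = (-1:ℚ)^j := by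
    rw [leadingCoeff_comp (by rw [lin_natDegree]; omega)]
    have h1 := (monic_descPochhammer ℚ j).leadingCoeff
    have h2 : (Polynomial.C (((r-1:ℕ)):ℚ) - X).leadingCoeff = -1 := by
      rw [show Polynomial.C (((r-1:ℕ)):ℚ) - X = -(X - Polynomial.C (((r-1:ℕ)):ℚ)) by ring,
          leadingCoeff_neg, leadingCoeff_X_sub_C]
    rw [h1, h2, descPochhammer_natDegree, one_mul]
  have h3 : ((descPochhammer ℚ j).comp (Polynomial.C (((r-1:ℕ)):ℚ) - X)).coeff j = (-1:ℚ)^j := by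
    unfold Polynomial.leadingCoeff at hlc
    rw [hdeg] at hlc
    exact hlc
  rw [h3, mul_comm]

/-- the Hahn-type polynomial -/
noncomputable def Pp (q r n : ℕ) : ℚ[X] :=
  ∑ j ∈ range (n+1),
    ((-1:ℚ)^j * (n.choose j) / ((q+(n-j)).choose (n-j))) • (Bp (n-j) * Dp r j)

lemma Pp_natDegree_le (q r n : ℕ) : (Pp q r n).natDegree ≤ n := by
  unfold Pp
  apply le_trans (Polynomial.natDegree_sum_le _ _)
  simp only [Finset.fold_max_le]
  constructor
  · omega
  intro j hj
  simp only [mem_range] at hj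
  apply le_trans (natDegree_smul_le _ _)
  apply le_trans (natDegree_mul_le)
  rw [Bp_natDegree, Dp_natDegree]
  omega


/-- expansion of the Rodrigues rows via the difference identity -/
lemma R_expand (q r n m : ℕ) (hm : m < r) :
    R q r n m = ∑ j ∈ range (n+1), (-1:ℚ)^j * (n.choose j) *
      (((m+q).choose (q+(n-j)) : ℕ) : ℚ) * (((r-1-m).choose j : ℕ) : ℚ) := by
  unfold R F
  rw [deltaN q n n n (n+r-1) m (le_refl n) (le_refl n) (by omega)]
  apply Finset.sum_congr rfl
  intro j hj
  simp only [mem_range] at hj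
  rw [show n - (n-j) = j by omega, show n+r-1-n = r-1 by omega]
  unfold G
  push_cast
  ring

/-- the weighted polynomial evaluation gives the Rodrigues rows -/
lemma Pp_eval_w (q r n m : ℕ) (hm : m < r) :
    (((m+q).choose q : ℕ) : ℚ) * (Pp q r n).eval (m:ℚ) = R q r n m := by
  rw [R_expand q r n m hm]
  unfold Pp
  rw [Polynomial.eval_finset_sum, Finset.mul_sum]
  apply Finset.sum_congr rfl
  intro j hj
  simp only [mem_range] at hj
  rw [Polynomial.eval_smul, Polynomial.eval_mul, Bp_eval, Dp_eval r j m (by omega)]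
  rw [ext_q q (n-j) m]
  have hnz : (((q+(n-j)).choose (n-j) : ℕ) : ℚ) ≠ 0 := by
    exact_mod_cast (Nat.choose_pos (show (n-j) ≤ q+(n-j) by omega)).ne'
  field_simp
  ring_nf
  field_simp

/-- Chu–Vandermonde for the leading coefficient -/
lemma vdm (q n : ℕ) :
    ∑ j ∈ range (n+1), n.choose j * (n+q).choose (q+(n-j)) = (2*n+q).choose (q+n) := by
  have h := Nat.add_choose_eq n (n+q) (q+n)
  rw [Finset.Nat.sum_antidiagonal_eq_sum_range_succ_mk] at h
  rw [show 2*n+q = n+(n+q) by omega, h]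
  have hsub : range (n+1) ⊆ range (q+n+1) := by
    intro k hk; simp only [mem_range] at *; omega
  rw [show (∑ k ∈ range (q+n+1), n.choose k * (n+q).choose (q+n-k))
      = ∑ k ∈ range (n+1), n.choose k * (n+q).choose (q+n-k) from
    (Finset.sum_subset hsub (fun k hk hnot => by
      simp only [mem_range] at hk hnot
      rw [Nat.choose_eq_zero_of_lt (show n < k by omega)]
      simp)).symm]
  apply Finset.sum_congr rfl
  intro k hk
  simp only [mem_range] at hk
  congr 2
  omega

lemma coeff_mul_top {p q : ℚ[X]} {a b : ℕ} (ha : p.natDegree = a) (hb : q.natDegree = b) :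
    (p*q).coeff (a+b) = p.coeff a * q.coeff b := by
  subst ha; subst hb
  rw [Polynomial.coeff_mul_degree_add_degree]
  rfl

/-- leading coefficient of the Hahn polynomial -/
lemma Pp_coeff_top (q r n : ℕ) :
    (Pp q r n).coeff n = ((2*n+q).choose (q+n) : ℚ) / ((n.factorial : ℚ) * (((n+q).choose q : ℕ) : ℚ)) := by
  unfold Pp
  rw [Polynomial.finset_sum_coeff]
  have hterm : ∀ j ∈ range (n+1),
      (((-1:ℚ)^j * (n.choose j) / ((q+(n-j)).choose (n-j))) • (Bp (n-j) * Dp r j)).coeff n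
        = ((n.choose j : ℚ) * ((n+q).choose (q+(n-j)) : ℚ)) / ((n.factorial : ℚ) * (((n+q).choose q : ℕ) : ℚ)) := by
    intro j hj
    simp only [mem_range] at hj
    rw [Polynomial.coeff_smul]
    have hprod : (Bp (n-j) * Dp r j).coeff n = (n.factorial : ℚ)⁻¹ * ((n.choose j : ℚ)) * (-1:ℚ)^j := by
      have hco := coeff_mul_top (Bp_natDegree (n-j)) (Dp_natDegree r j)
      rw [show (n-j)+j = n by omega] at hco
      rw [hco, Bp_coeff_top, Dp_coeff_top]
      have hfac : ((n-j).factorial : ℚ) * (j.factorial : ℚ) * (n.choose j : ℚ) = (n.factorial : ℚ) := by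
        have h := Nat.choose_mul_factorial_mul_factorial (show j ≤ n by omega)
        have : (n.choose j * j.factorial * (n-j).factorial : ℕ) = (n.factorial : ℕ) := h
        exact_mod_cast by rw [← this]; push_cast; ring
      have hnz1 : ((n-j).factorial : ℚ) ≠ 0 := by exact_mod_cast (n-j).factorial_ne_zero
      have hnz2 : ((j).factorial : ℚ) ≠ 0 := by exact_mod_cast (j).factorial_ne_zero
      have hnz3 : ((n).factorial : ℚ) ≠ 0 := by exact_mod_cast (n).factorial_ne_zero
      field_simp
      rw [← hfac]
    rw [hprod]
    have hext := ext_q q (n-j) n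
    have hnzc : (((q+(n-j)).choose (n-j) : ℕ) : ℚ) ≠ 0 := by
      exact_mod_cast (Nat.choose_pos (show (n-j) ≤ q+(n-j) by omega)).ne'
    have hnzw : (((n+q).choose q : ℕ) : ℚ) ≠ 0 := by
      exact_mod_cast (Nat.choose_pos (show q ≤ n+q by omega)).ne'
    have hnz3 : ((n).factorial : ℚ) ≠ 0 := by exact_mod_cast (n).factorial_ne_zero
    have hsymm : ((n).choose (n-j) : ℚ) = ((n).choose j : ℚ) := by
      rw [Nat.choose_symm (show j ≤ n by omega)]
    have hsq : (-1:ℚ)^j * (-1:ℚ)^j = 1 := by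
      rw [← pow_add, show j+j = 2*j by omega, pow_mul]
      norm_num
    rw [hext, hsymm]
    field_simp
    ring_nf
    rw [show ((-1:ℚ))^(j*2) = ((-1:ℚ)^2)^j by rw [← pow_mul, Nat.mul_comm]]
    norm_num
    field_simp
  rw [Finset.sum_congr rfl hterm, ← Finset.sum_div]
  congr 1
  exact_mod_cast vdm q n


/-- orthogonality against all polynomials of degree `< n` -/
lemma orth_polyeval (q r n : ℕ) (p : ℚ[X]) (hdeg : p.degree < (n:ℕ)) :
    ∑ m ∈ range r, R q r n m * p.eval (m:ℚ) = 0 := by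
  by_cases hp : p = 0
  · simp [hp]
  have hnat : p.natDegree < n := (Polynomial.natDegree_lt_iff_degree_lt hp).2 hdeg
  have heval : ∀ m : ℕ, p.eval (m:ℚ) = ∑ k ∈ range n, p.coeff k * (m:ℚ)^k :=
    fun m => Polynomial.eval_eq_sum_range' hnat _
  calc ∑ m ∈ range r, R q r n m * p.eval (m:ℚ)
      = ∑ m ∈ range r, ∑ k ∈ range n, p.coeff k * (R q r n m * (m:ℚ)^k) := by
        apply Finset.sum_congr rfl
        intro m _
        rw [heval m, Finset.mul_sum]
        apply Finset.sum_congr rfl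
        intro k _
        ring
    _ = ∑ k ∈ range n, p.coeff k * ∑ m ∈ range r, R q r n m * (m:ℚ)^k := by
        rw [Finset.sum_comm]
        exact Finset.sum_congr rfl fun k _ => by rw [Finset.mul_sum]
    _ = 0 := by
        apply Finset.sum_eq_zero
        intro k hk
        simp only [mem_range] at hk
        rw [orth_pow q r n k hk, mul_zero]

/-- the diagonal entries of the transformed moment matrix -/
lemma Ndiag (q r n : ℕ) (hn : n < r) :
    ∑ m ∈ range r, R q r n m * (m:ℚ)^n
      = (n.factorial : ℚ) * ((q+n+r).choose (q+2*n+1) : ℚ) := by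
  have hsplit : ∀ m : ℕ, (m:ℚ)^n
      = (n.factorial : ℚ) * ((m.choose n : ℕ):ℚ) + (X^n - descPochhammer ℚ n).eval (m:ℚ) := by
    intro m
    rw [Polynomial.eval_sub, Polynomial.eval_pow, Polynomial.eval_X,
        descPochhammer_eval_eq_descFactorial ℚ m n, Nat.descFactorial_eq_factorial_mul_choose]
    push_cast
    ring
  have hdeg : (X^n - descPochhammer ℚ n).degree < ((n:ℕ) : WithBot ℕ) := by
    have h1 : (X^n : ℚ[X]).degree = (n:ℕ) := Polynomial.degree_X_pow n
    have h2 : (descPochhammer ℚ n).degree = (n:ℕ) := by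
      have : descPochhammer ℚ n ≠ 0 := (monic_descPochhammer ℚ n).ne_zero
      rw [Polynomial.degree_eq_natDegree this, descPochhammer_natDegree]
    have h3 : (X^n : ℚ[X]).leadingCoeff = 1 := Polynomial.monic_X_pow n
    have h4 : (descPochhammer ℚ n).leadingCoeff = 1 := monic_descPochhammer ℚ n
    have := Polynomial.degree_sub_lt (h1.trans h2.symm) (pow_ne_zero n Polynomial.X_ne_zero) (h3.trans h4.symm)
    rwa [h1] at this
  calc ∑ m ∈ range r, R q r n m * (m:ℚ)^n
      = ∑ m ∈ range r, ((n.factorial : ℚ) * (R q r n m * ((m.choose n : ℕ):ℚ))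
          + R q r n m * (X^n - descPochhammer ℚ n).eval (m:ℚ)) := by
        apply Finset.sum_congr rfl
        intro m _
        rw [hsplit m]
        ring
    _ = (n.factorial : ℚ) * ∑ m ∈ range r, R q r n m * ((m.choose n : ℕ):ℚ)
          + ∑ m ∈ range r, R q r n m * (X^n - descPochhammer ℚ n).eval (m:ℚ) := by
        rw [Finset.sum_add_distrib, Finset.mul_sum]
    _ = (n.factorial : ℚ) * ((q+n+r).choose (q+2*n+1) : ℚ) := by
        rw [orth_diag q r n hn, orth_polyeval q r n _ hdeg, add_zero]


/-- per-factor identity for the final product -/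
lemma final_term (q r j : ℕ) (hj : j < r) :
    (((j.factorial : ℚ)) * ((q+j+r).choose (q+2*j+1) : ℚ)) /
      (((2*j+q).choose (q+j) : ℚ) / ((j.factorial : ℚ) * (((j+q).choose q : ℕ) : ℚ)))
    = ((j.factorial : ℚ) * ((j+q).factorial : ℚ))^2 * ((j+q+r).factorial : ℚ) /
      ((q.factorial : ℚ) * ((r-j-1).factorial : ℚ) * ((2*j+q).factorial : ℚ)
        * ((2*j+q+1).factorial : ℚ)) := by
  rw [show q+j+r = j+q+r by omega, show q+2*j+1 = 2*j+q+1 by omega]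
  rw [Nat.cast_choose ℚ (show 2*j+q+1 ≤ j+q+r by omega),
      Nat.cast_choose ℚ (show q+j ≤ 2*j+q by omega),
      Nat.cast_choose ℚ (show q ≤ j+q by omega)]
  rw [show j+q+r-(2*j+q+1) = r-j-1 by omega, show 2*j+q-(q+j) = j by omega,
      show j+q-q = j by omega]
  have h1 : ((j.factorial : ℕ) : ℚ) ≠ 0 := by exact_mod_cast j.factorial_ne_zero
  have h2 : ((q.factorial : ℕ) : ℚ) ≠ 0 := by exact_mod_cast q.factorial_ne_zero
  have h3 : (((j+q).factorial : ℕ) : ℚ) ≠ 0 := by exact_mod_cast (j+q).factorial_ne_zero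
  have h4 : (((r-j-1).factorial : ℕ) : ℚ) ≠ 0 := by exact_mod_cast (r-j-1).factorial_ne_zero
  have h5 : (((2*j+q).factorial : ℕ) : ℚ) ≠ 0 := by exact_mod_cast (2*j+q).factorial_ne_zero
  have h6 : (((2*j+q+1).factorial : ℕ) : ℚ) ≠ 0 := by exact_mod_cast (2*j+q+1).factorial_ne_zero
  have h7 : (((j+q+r).factorial : ℕ) : ℚ) ≠ 0 := by exact_mod_cast (j+q+r).factorial_ne_zero
  field_simp
  ring_nf

end HahnGram

open HahnGram Polynomial

/-- closed product evaluation of the Hankel determinant with Hahn-weight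
entries: `det_{1≤j,k≤s}[ Σ_{m=0}^{r-1} m^{j+k-2} C(m+q,m) ]
= ∏_{j=0}^{s-1} (j!(j+q)!)² (j+q+r)! / ( q! (r−j−1)! (2j+q)! (2j+q+1)! )`,
as an identity of rational numbers. -/
theorem hahn_gram_determinant (s r q : ℕ) (hs : 1 ≤ s) (hsr : s ≤ r) :
    Matrix.det (Matrix.of fun j k : Fin s =>
        ∑ m ∈ Finset.range r,
          (m : ℚ) ^ ((j : ℕ) + (k : ℕ)) * (Nat.choose (m + q) m : ℚ))
      =
    ∏ j ∈ Finset.range s,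
      ((Nat.factorial j : ℚ) * (Nat.factorial (j + q) : ℚ)) ^ 2 *
          (Nat.factorial (j + q + r) : ℚ) /
        ((Nat.factorial q : ℚ) * (Nat.factorial (r - j - 1) : ℚ) *
          (Nat.factorial (2 * j + q) : ℚ) * (Nat.factorial (2 * j + q + 1) : ℚ)) := by
  classical
  set Mmat : Matrix (Fin s) (Fin s) ℚ := Matrix.of fun j k : Fin s =>
      ∑ m ∈ Finset.range r, (m : ℚ) ^ ((j : ℕ) + (k : ℕ)) * (Nat.choose (m + q) m : ℚ) with hM
  set L : Matrix (Fin s) (Fin s) ℚ := Matrix.of fun n i : Fin s => (Pp q r n).coeff i with hL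
  set Nm : Matrix (Fin s) (Fin s) ℚ := Matrix.of fun n k : Fin s =>
      ∑ m ∈ range r, R q r n m * (m:ℚ)^(k:ℕ) with hN
  -- factorization L * M = N
  have hmul : L * Mmat = Nm := by
    ext n k
    rw [Matrix.mul_apply]
    simp only [hL, hM, hN, Matrix.of_apply]
    calc ∑ i : Fin s, (Pp q r n).coeff i *
            ∑ m ∈ range r, (m : ℚ) ^ ((i : ℕ) + (k : ℕ)) * (Nat.choose (m + q) m : ℚ)
        = ∑ m ∈ range r, ∑ i : Fin s,
            (Pp q r n).coeff i * ((m : ℚ) ^ ((i : ℕ) + (k : ℕ)) * (Nat.choose (m + q) m : ℚ)) := by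
          rw [Finset.sum_comm]
          exact Finset.sum_congr rfl fun i _ => by rw [Finset.mul_sum]
      _ = ∑ m ∈ range r, R q r n m * (m:ℚ)^(k:ℕ) := by
          apply Finset.sum_congr rfl
          intro m hm
          simp only [mem_range] at hm
          have hev : (Pp q r n).eval (m:ℚ) = ∑ i ∈ range s, (Pp q r n).coeff i * (m:ℚ)^i :=
            Polynomial.eval_eq_sum_range' (lt_of_le_of_lt (Pp_natDegree_le q r n) n.isLt) _
          have hw : (Nat.choose (m + q) m : ℚ) = ((m+q).choose q : ℚ) := by
            rw [Nat.choose_symm_add]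
          calc ∑ i : Fin s, (Pp q r n).coeff i * ((m : ℚ) ^ ((i : ℕ) + (k : ℕ)) * (Nat.choose (m + q) m : ℚ))
              = (∑ i ∈ range s, (Pp q r n).coeff i * (m:ℚ)^i) * ((m:ℚ)^(k:ℕ) * ((m+q).choose q : ℚ)) := by
                rw [Finset.sum_mul, Fin.sum_univ_eq_sum_range
                  (fun i => (Pp q r n).coeff i * ((m : ℚ) ^ (i + (k : ℕ)) * (Nat.choose (m + q) m : ℚ)))]
                apply Finset.sum_congr rfl
                intro i _
                rw [pow_add, hw]
                ring
            _ = R q r n m * (m:ℚ)^(k:ℕ) := by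
                rw [← hev, ← Pp_eval_w q r n m hm]
                ring
  -- L is lower triangular with known diagonal
  have hLtri : L.BlockTriangular OrderDual.toDual := by
    intro i j hij
    simp only [hL, Matrix.of_apply]
    exact Polynomial.coeff_eq_zero_of_natDegree_lt
      (lt_of_le_of_lt (Pp_natDegree_le q r i) hij)
  have hdetL : L.det = ∏ n : Fin s,
      (((2*(n:ℕ)+q).choose (q+(n:ℕ)) : ℚ) / (((n:ℕ).factorial : ℚ) * ((((n:ℕ)+q).choose q : ℕ) : ℚ))) := by
    rw [Matrix.det_of_lowerTriangular L hLtri]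
    exact Finset.prod_congr rfl fun n _ => Pp_coeff_top q r n
  -- N is upper triangular with known diagonal
  have hNtri : Nm.BlockTriangular id := by
    intro n k hnk
    simp only [hN, Matrix.of_apply]
    exact orth_pow q r n k hnk
  have hdetN : Nm.det = ∏ n : Fin s,
      (((n:ℕ).factorial : ℚ) * ((q+(n:ℕ)+r).choose (q+2*(n:ℕ)+1) : ℚ)) := by
    rw [Matrix.det_of_upperTriangular hNtri]
    exact Finset.prod_congr rfl fun n _ => Ndiag q r n (lt_of_lt_of_le n.isLt hsr)
  have hdet : L.det * Mmat.det = Nm.det := by rw [← Matrix.det_mul, hmul]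
  -- nonvanishing of det L
  have hfac_ne : ∀ n : ℕ, ((n.factorial : ℕ) : ℚ) ≠ 0 := fun n => by
    exact_mod_cast n.factorial_ne_zero
  have hchoose_ne : ∀ a b : ℕ, b ≤ a → ((a.choose b : ℕ) : ℚ) ≠ 0 := fun a b h => by
    exact_mod_cast (Nat.choose_pos h).ne'
  have hdL_ne : ∀ n : Fin s,
      (((2*(n:ℕ)+q).choose (q+(n:ℕ)) : ℚ) / (((n:ℕ).factorial : ℚ) * ((((n:ℕ)+q).choose q : ℕ) : ℚ))) ≠ 0 := by
    intro n
    apply div_ne_zero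
    · exact hchoose_ne _ _ (by omega)
    · exact mul_ne_zero (hfac_ne _) (hchoose_ne _ _ (by omega))
  have hdetL_ne : L.det ≠ 0 := by
    rw [hdetL]
    exact Finset.prod_ne_zero_iff.2 fun n _ => hdL_ne n
  -- extract det M
  have hMdet : Mmat.det = Nm.det / L.det := by
    rw [← hdet, mul_comm, mul_div_assoc, div_self hdetL_ne, mul_one]
  rw [hMdet, hdetN, hdetL, ← Finset.prod_div_distrib,
      Fin.prod_univ_eq_prod_range (fun x : ℕ => (x.factorial : ℚ)
        * ((q+x+r).choose (q+2*x+1) : ℚ)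
        / (((2*x+q).choose (q+x) : ℚ) / ((x.factorial : ℚ) * (((x+q).choose q : ℕ) : ℚ)))) s]
  apply Finset.prod_congr rfl
  intro j hj
  simp only [mem_range] at hj
  exact final_term q r j (by omega)
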